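/- Let (X,d_X) and (Y,d_Y) be metric spaces, let n ≥ 1 be an integer, let F: X → Y be any map, and let S ⊆ X satisfy Hⁿ(S) < ∞, where Hⁿ is the n-dimensional Hausdorff (outer) measure. Suppose S = ⋃_{j∈ℕ} S_j, where for every j ∈ ℕ and every ε > 0 there exists r̄ > 0 such that H^n_∞(F(S ∩ B_r(p))) ≤ ε·rⁿ for every p ∈ S_j and every r ∈ (0, r̄), with H^n_∞ the n-dimensional Hausdorff content on Y. Then Hⁿ(F(S)) = 0. -/

import Mathlib

open MeasureTheory Filter Set Metric Topology
open scoped ENNReal NNReal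

noncomputable section

/-- `ω_k = π^{k/2} / Γ(1 + k/2)`, the volume of the unit ball of `ℝ^k` for integer `k`. -/
def omegaN (k : ℕ) : ℝ := Real.pi ^ ((k : ℝ) / 2) / Real.Gamma ((k : ℝ) / 2 + 1)

/-- The `n`-dimensional Hausdorff measure with the geometric normalization of the paper,
`Hⁿ(E) = lim_δ inf { Σ_i ω_n (diam E_i / 2)ⁿ }`; it equals `(ω_n/2ⁿ)` times Mathlib's
`μH[n]` (which uses the gauge `diamⁿ`). -/
def hausdorffPaper (X : Type*) [EMetricSpace X] [MeasurableSpace X] [BorelSpace X]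
    (n : ℕ) : Measure X :=
  ENNReal.ofReal (omegaN n / 2 ^ n) • μH[(n : ℝ)]

/-- The `n`-dimensional Hausdorff content,
`H^n_∞(A) = inf { Σ_i ω_n (diam E_i / 2)ⁿ : A ⊆ ⋃_i E_i }`. -/
def hContent {Y : Type*} [PseudoEMetricSpace Y] (n : ℕ) (A : Set Y) : ℝ≥0∞ :=
  ⨅ (E : ℕ → Set Y) (_ : A ⊆ ⋃ i, E i),
    ∑' i, ENNReal.ofReal (omegaN n) * (EMetric.diam (E i) / 2) ^ n

lemma omegaN_pos (k : ℕ) : 0 < omegaN k :=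
  div_pos (Real.rpow_pos_of_pos Real.pi_pos _) (Real.Gamma_pos_of_pos (by positivity))

lemma ennreal_add_pow_le (x y : ℝ≥0∞) (n : ℕ) : (x + y) ^ n ≤ 2 ^ n * (x ^ n + y ^ n) := by
  calc (x + y) ^ n ≤ (2 * max x y) ^ n := by
        refine pow_le_pow_left' ?_ n
        rw [two_mul]
        exact add_le_add (le_max_left _ _) (le_max_right _ _)
    _ = 2 ^ n * (max x y) ^ n := mul_pow _ _ _
    _ ≤ 2 ^ n * (x ^ n + y ^ n) := by
        gcongr
        rcases le_total x y with h | h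
        · rw [max_eq_right h]; exact le_add_self
        · rw [max_eq_left h]; exact le_self_add

lemma ennreal_le_of_pow_le {x y : ℝ≥0∞} {n : ℕ} (hn : n ≠ 0) (h : x ^ n ≤ y ^ n) : x ≤ y := by
  by_contra hxy
  exact absurd h (not_le.mpr (ENNReal.pow_lt_pow_left hn (not_le.mp hxy)))

/-- If a set admits, for every `δ, η > 0`, a countable cover by sets of diameter at most `δ`
with total `n`-th power of diameters at most `η`, then its `n`-dimensional Hausdorff measure
vanishes. -/
lemma hm_zero_of_covers {Y : Type*} [MetricSpace Y] [MeasurableSpace Y] [BorelSpace Y]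
    (n : ℕ) (A : Set Y)
    (H : ∀ δ η : ℝ, 0 < δ → 0 < η → ∃ t : ℕ → Set Y, A ⊆ ⋃ m, t m ∧
      (∀ m, EMetric.diam (t m) ≤ ENNReal.ofReal δ) ∧
      ∑' m, EMetric.diam (t m) ^ n ≤ ENNReal.ofReal η) :
    μH[(n : ℝ)] A = 0 := by
  refine le_antisymm ?_ zero_le
  rw [Measure.hausdorffMeasure_apply]
  refine iSup₂_le fun r hr => ?_
  refine ENNReal.le_of_forall_pos_le_add fun η hη _ => ?_
  rw [zero_add]
  obtain ⟨δ, hδ0, hδr⟩ : ∃ δ : ℝ, 0 < δ ∧ ENNReal.ofReal δ ≤ r := by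
    rcases eq_or_ne r ⊤ with h | h
    · exact ⟨1, one_pos, by simp [h]⟩
    · exact ⟨r.toReal, ENNReal.toReal_pos hr.ne' h, by rw [ENNReal.ofReal_toReal h]⟩
  obtain ⟨t, htA, htd, hts⟩ := H δ η hδ0 (by exact_mod_cast hη)
  calc (⨅ (t : ℕ → Set Y) (_ : A ⊆ ⋃ m, t m) (_ : ∀ m, EMetric.diam (t m) ≤ r),
          ∑' m, ⨆ _ : (t m).Nonempty, EMetric.diam (t m) ^ (n : ℝ))
      ≤ ∑' m, ⨆ _ : (t m).Nonempty, EMetric.diam (t m) ^ (n : ℝ) :=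
        iInf₂_le_of_le t htA (iInf_le_of_le (fun m => (htd m).trans hδr) le_rfl)
    _ ≤ ∑' m, EMetric.diam (t m) ^ n :=
        ENNReal.tsum_le_tsum fun m => iSup_le fun _ => le_of_eq (ENNReal.rpow_natCast _ n)
    _ ≤ ENNReal.ofReal η := hts
    _ = η := ENNReal.ofReal_coe_nnreal

/-- Let `F : X → Y` be any map and `S ⊆ X` with `Hⁿ(S) < ∞`. Suppose
`S = ⋃_j S_j` where for every `j` and every `ε > 0` there is `r̄ > 0` such that
`H^n_∞(F(S ∩ B_r(p))) ≤ ε·rⁿ` for every `p ∈ S_j` and every `r ∈ (0,r̄)`. Then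
`Hⁿ(F(S)) = 0`. -/
theorem statement13
    {X Y : Type*} [MetricSpace X] [MeasurableSpace X] [BorelSpace X]
    [MetricSpace Y] [MeasurableSpace Y] [BorelSpace Y]
    (n : ℕ) (hn : 1 ≤ n) (F : X → Y) (S : Set X)
    (hSfin : hausdorffPaper X n S < ⊤)
    (Sj : ℕ → Set X) (hcover : S = ⋃ j, Sj j)
    (h : ∀ j : ℕ, ∀ ε : ℝ, 0 < ε → ∃ rbar : ℝ, 0 < rbar ∧
      ∀ p ∈ Sj j, ∀ r : ℝ, 0 < r → r < rbar →
        hContent n (F '' (S ∩ Metric.ball p r)) ≤ ENNReal.ofReal (ε * r ^ n)) :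
    hausdorffPaper Y n (F '' S) = 0 := by
  classical
  have hω : 0 < omegaN n := omegaN_pos n
  set ω := omegaN n with hωdef
  have hn0 : n ≠ 0 := by omega
  have hω0' : ENNReal.ofReal ω ≠ 0 := (ENNReal.ofReal_pos.mpr hω).ne'
  have hωtop : ENNReal.ofReal ω ≠ ⊤ := ENNReal.ofReal_ne_top
  have hμS : μH[(n : ℝ)] S < ⊤ := by
    by_contra htop
    rw [not_lt, top_le_iff] at htop
    have hc0 : ENNReal.ofReal (ω / 2 ^ n) ≠ 0 := by
      refine (ENNReal.ofReal_pos.mpr ?_).ne'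
      exact div_pos hω (by positivity)
    rw [hausdorffPaper, Measure.smul_apply, smul_eq_mul, htop, ENNReal.mul_top hc0] at hSfin
    exact absurd hSfin (lt_irrefl _)
  have hj0 : ∀ j, μH[(n : ℝ)] (F '' (S ∩ Sj j)) = 0 := by
    intro j
    refine hm_zero_of_covers n _ ?_
    intro δ η hδ hη
    set μ := μH[(n : ℝ)] S with hμdef
    have hq : (0:ℝ) < 2 ^ n / ω := div_pos (by positivity) hω
    set Cr : ℝ := 2 ^ n / ω * 2 ^ n * (μ.toReal + 1) + 2 ^ n / ω * (2 ^ n + 1) * 2 with hCrdef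
    have hCr0 : (0:ℝ) ≤ Cr := by
      have h1 : (0:ℝ) ≤ μ.toReal + 1 := by positivity
      have : (0:ℝ) ≤ 2 ^ n / ω * 2 ^ n * (μ.toReal + 1) :=
        mul_nonneg (mul_nonneg hq.le (by positivity)) h1
      have : (0:ℝ) ≤ 2 ^ n / ω * (2 ^ n + 1) * 2 :=
        mul_nonneg (mul_nonneg hq.le (by positivity)) (by norm_num)
      rw [hCrdef]; linarith [mul_nonneg (mul_nonneg hq.le (by positivity : (0:ℝ) ≤ 2 ^ n)) h1]
    set ε : ℝ := min (η / (Cr + 1)) (ω * (δ / 2) ^ n / 2) with hεdef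
    have hε0 : 0 < ε := by
      refine lt_min (div_pos hη (by linarith)) ?_
      have : (0:ℝ) < ω * (δ / 2) ^ n := mul_pos hω (by positivity)
      linarith
    obtain ⟨rbar, hrbar, hball⟩ := h j ε hε0
    set τ : ℝ := min rbar 1 / 4 with hτdef
    have hτ0 : 0 < τ := by
      rw [hτdef]
      have : 0 < min rbar 1 := lt_min hrbar one_pos
      linarith
    have hτ1 : τ ≤ 1 / 4 := by
      rw [hτdef]
      have := min_le_right rbar 1
      linarith
    have h2τ : 2 * τ < rbar := by
      rw [hτdef]
      have := min_le_left rbar 1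
      linarith
    -- a cover of `S` at scale `τ` with controlled total gauge
    obtain ⟨E, hEcov, hEdiam, hEsum⟩ : ∃ E : ℕ → Set X, S ⊆ ⋃ i, E i ∧
        (∀ i, EMetric.diam (E i) ≤ ENNReal.ofReal τ) ∧
        ∑' i, ⨆ _ : (E i).Nonempty, EMetric.diam (E i) ^ (n : ℝ) ≤ μ + 1 := by
      have hle : (⨅ (t : ℕ → Set X) (_ : S ⊆ ⋃ i, t i)
          (_ : ∀ i, EMetric.diam (t i) ≤ ENNReal.ofReal τ),
          ∑' i, ⨆ _ : (t i).Nonempty, EMetric.diam (t i) ^ (n : ℝ)) ≤ μ := by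
        rw [hμdef, Measure.hausdorffMeasure_apply]
        exact le_iSup₂ (f := fun (r : ℝ≥0∞) (_ : 0 < r) =>
          ⨅ (t : ℕ → Set X) (_ : S ⊆ ⋃ i, t i) (_ : ∀ i, EMetric.diam (t i) ≤ r),
            ∑' i, ⨆ _ : (t i).Nonempty, EMetric.diam (t i) ^ (n : ℝ))
          (ENNReal.ofReal τ) (ENNReal.ofReal_pos.mpr hτ0)
      have hlt := hle.trans_lt (ENNReal.lt_add_right hμS.ne one_ne_zero)
      obtain ⟨E, hE⟩ := iInf_lt_iff.mp hlt
      obtain ⟨h1, hE⟩ := iInf_lt_iff.mp hE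
      obtain ⟨h2, hE⟩ := iInf_lt_iff.mp hE
      exact ⟨E, h1, h2, hE.le⟩
    have hEfin : ∀ i, EMetric.diam (E i) ≠ ⊤ :=
      fun i => ((hEdiam i).trans_lt ENNReal.ofReal_lt_top).ne
    -- the radii
    set R : ℕ → ℝ := fun i => (EMetric.diam (E i)).toReal + τ * (2⁻¹ : ℝ) ^ i with hRdef
    have hpow1 : ∀ i : ℕ, (2⁻¹ : ℝ) ^ i ≤ 1 := fun i => pow_le_one₀ (by norm_num) (by norm_num)
    have hpownn : ∀ i : ℕ, (0:ℝ) ≤ (2⁻¹ : ℝ) ^ i := fun i => pow_nonneg (by norm_num) i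
    have hR0 : ∀ i, 0 < R i := fun i => by
      have h1 : (0:ℝ) < τ * (2⁻¹ : ℝ) ^ i := mul_pos hτ0 (pow_pos (by norm_num) i)
      have h2 := ENNReal.toReal_nonneg (a := EMetric.diam (E i))
      simp only [hRdef]; linarith
    have hdτ : ∀ i, (EMetric.diam (E i)).toReal ≤ τ :=
      fun i => ENNReal.toReal_le_of_le_ofReal hτ0.le (hEdiam i)
    have hR2τ : ∀ i, R i ≤ 2 * τ := fun i => by
      have h1 := hdτ i
      have h2 : τ * (2⁻¹ : ℝ) ^ i ≤ τ := by
        nlinarith [hpow1 i, hτ0.le, hpownn i]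
      simp only [hRdef]; linarith
    have hR1 : ∀ i, R i ≤ 1 := fun i => by have := hR2τ i; linarith [hτ1]
    have hRrbar : ∀ i, R i < rbar := fun i => lt_of_le_of_lt (hR2τ i) h2τ
    -- the covers of the images of the small pieces
    have key : ∀ i : ℕ, ∃ G : ℕ → Set Y,
        F '' ((S ∩ Sj j) ∩ E i) ⊆ ⋃ k, G k ∧
        ∑' k, ENNReal.ofReal ω * (EMetric.diam (G k) / 2) ^ n ≤
          ENNReal.ofReal (ε * R i ^ n) + ENNReal.ofReal ε * (2⁻¹ : ℝ≥0∞) ^ i := by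
      intro i
      by_cases hne : ((S ∩ Sj j) ∩ E i).Nonempty
      · obtain ⟨p, ⟨⟨hpS, hpj⟩, hpE⟩⟩ := hne
        have hcont := hball p hpj (R i) (hR0 i) (hRrbar i)
        have hslack : ENNReal.ofReal ε * (2⁻¹ : ℝ≥0∞) ^ i ≠ 0 :=
          mul_ne_zero (ENNReal.ofReal_pos.mpr hε0).ne'
            (pow_ne_zero i (ENNReal.inv_ne_zero.mpr (by norm_num)))
        have hlt : hContent n (F '' (S ∩ Metric.ball p (R i))) <
            ENNReal.ofReal (ε * R i ^ n) + ENNReal.ofReal ε * (2⁻¹ : ℝ≥0∞) ^ i :=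
          hcont.trans_lt (ENNReal.lt_add_right ENNReal.ofReal_ne_top hslack)
        unfold hContent at hlt
        obtain ⟨G, hG⟩ := iInf_lt_iff.mp hlt
        obtain ⟨hGcov, hGsum⟩ := iInf_lt_iff.mp hG
        refine ⟨G, ?_, hGsum.le⟩
        refine (image_mono ?_).trans hGcov
        rintro x ⟨⟨hxS, _⟩, hxE⟩
        refine ⟨hxS, ?_⟩
        have hedist : edist x p ≤ EMetric.diam (E i) := EMetric.edist_le_diam_of_mem hxE hpE
        have hd : dist x p ≤ (EMetric.diam (E i)).toReal := by
          rw [dist_edist]; exact ENNReal.toReal_mono (hEfin i) hedist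
        have hxb : dist x p < R i := by
          have h1 : (0:ℝ) < τ * (2⁻¹:ℝ) ^ i := mul_pos hτ0 (pow_pos (by norm_num) i)
          simp only [hRdef]; linarith
        exact hxb
      · rw [not_nonempty_iff_eq_empty] at hne
        refine ⟨fun _ => ∅, by simp [hne], ?_⟩
        calc ∑' (_ : ℕ), ENNReal.ofReal ω * (EMetric.diam (∅ : Set Y) / 2) ^ n
            = ∑' (_ : ℕ), (0 : ℝ≥0∞) := tsum_congr fun k => by simp [zero_pow hn0, EMetric.diam]
          _ = 0 := tsum_zero
          _ ≤ _ := zero_le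
    choose G hGcov hGsum using key
    -- every member of every cover has diameter at most `δ`
    have hdiamG : ∀ i k, EMetric.diam (G i k) ≤ ENNReal.ofReal δ := by
      intro i k
      have hterm : ENNReal.ofReal ω * (EMetric.diam (G i k) / 2) ^ n ≤
          ENNReal.ofReal (ε * R i ^ n) + ENNReal.ofReal ε * (2⁻¹ : ℝ≥0∞) ^ i :=
        le_trans (ENNReal.le_tsum k) (hGsum i)
      have h1 : ENNReal.ofReal (ε * R i ^ n) ≤ ENNReal.ofReal ε := by
        refine ENNReal.ofReal_le_ofReal ?_
        have hp1 : R i ^ n ≤ 1 := pow_le_one₀ (hR0 i).le (hR1 i)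
        nlinarith [hε0.le, pow_nonneg (hR0 i).le n]
      have h2 : ENNReal.ofReal ε * (2⁻¹ : ℝ≥0∞) ^ i ≤ ENNReal.ofReal ε :=
        mul_le_of_le_one_right' (pow_le_one' (ENNReal.inv_le_one.mpr (by norm_num)) i)
      have h3 : ENNReal.ofReal ω * (EMetric.diam (G i k) / 2) ^ n ≤ ENNReal.ofReal (2 * ε) := by
        have he : ENNReal.ofReal (2 * ε) = ENNReal.ofReal ε + ENNReal.ofReal ε := by
          rw [two_mul, ENNReal.ofReal_add hε0.le hε0.le]
        rw [he]
        exact hterm.trans (add_le_add h1 h2)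
      have h4 : (2:ℝ) * ε ≤ ω * (δ / 2) ^ n := by
        have hm : ε ≤ ω * (δ / 2) ^ n / 2 := by
          rw [hεdef]; exact min_le_right _ _
        linarith
      have h5 : ENNReal.ofReal ω * (EMetric.diam (G i k) / 2) ^ n ≤
          ENNReal.ofReal ω * ENNReal.ofReal (δ / 2) ^ n := by
        refine h3.trans ?_
        rw [← ENNReal.ofReal_pow (by positivity), ← ENNReal.ofReal_mul hω.le]
        exact ENNReal.ofReal_le_ofReal h4
      have h6 : (EMetric.diam (G i k) / 2) ^ n ≤ ENNReal.ofReal (δ / 2) ^ n :=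
        (ENNReal.mul_le_mul_iff_right hω0' hωtop).mp h5
      have h7 : EMetric.diam (G i k) / 2 ≤ ENNReal.ofReal (δ / 2) :=
        ennreal_le_of_pow_le hn0 h6
      calc EMetric.diam (G i k) = 2 * (EMetric.diam (G i k) / 2) :=
            (ENNReal.mul_div_cancel two_ne_zero (by norm_num)).symm
        _ ≤ 2 * ENNReal.ofReal (δ / 2) := by gcongr
        _ = ENNReal.ofReal δ := by
            rw [show (2:ℝ≥0∞) = ENNReal.ofReal 2 by norm_num,
              ← ENNReal.ofReal_mul (by norm_num)]
            congr 1
            ring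
    -- block sums
    set C : ℝ≥0∞ := 2 ^ n * (ENNReal.ofReal ω)⁻¹ with hCdef
    have hblock : ∀ i, ∑' k, EMetric.diam (G i k) ^ n ≤
        C * (ENNReal.ofReal (ε * R i ^ n) + ENNReal.ofReal ε * (2⁻¹ : ℝ≥0∞) ^ i) := by
      intro i
      have h1 : ∀ k : ℕ, EMetric.diam (G i k) ^ n
          = 2 ^ n * (EMetric.diam (G i k) / 2) ^ n := by
        intro k
        rw [← mul_pow]
        congr 1
        exact (ENNReal.mul_div_cancel two_ne_zero (by norm_num)).symm
      calc ∑' k, EMetric.diam (G i k) ^ n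
          = 2 ^ n * ∑' k, (EMetric.diam (G i k) / 2) ^ n := by
            simp_rw [h1]; rw [ENNReal.tsum_mul_left]
        _ = C * ∑' k, ENNReal.ofReal ω * (EMetric.diam (G i k) / 2) ^ n := by
            rw [ENNReal.tsum_mul_left, hCdef, mul_assoc, ← mul_assoc (ENNReal.ofReal ω)⁻¹,
              ENNReal.inv_mul_cancel hω0' hωtop, one_mul]
        _ ≤ _ := mul_le_mul_right (hGsum i) C
    have hsupd : ∀ i, EMetric.diam (E i) ^ n ≤
        ⨆ _ : (E i).Nonempty, EMetric.diam (E i) ^ (n : ℝ) := by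
      intro i
      rcases eq_empty_or_nonempty (E i) with hEi | hEi
      · simp [hEi, EMetric.diam, zero_pow hn0]
      · rw [iSup_pos hEi, ENNReal.rpow_natCast]
    set A : ℝ≥0∞ := C * ENNReal.ofReal ε * 2 ^ n with hAdef
    set B : ℝ≥0∞ := C * ENNReal.ofReal ε * (2 ^ n + 1) with hBdef
    have hblock2 : ∀ i, ∑' k, EMetric.diam (G i k) ^ n ≤
        A * (⨆ _ : (E i).Nonempty, EMetric.diam (E i) ^ (n : ℝ)) + B * (2⁻¹ : ℝ≥0∞) ^ i := by
      intro i
      refine (hblock i).trans ?_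
      have e1 : ENNReal.ofReal (ε * R i ^ n) = ENNReal.ofReal ε * ENNReal.ofReal (R i) ^ n := by
        rw [ENNReal.ofReal_mul hε0.le, ENNReal.ofReal_pow (hR0 i).le]
      have e2 : ENNReal.ofReal (R i) =
          EMetric.diam (E i) + ENNReal.ofReal (τ * (2⁻¹:ℝ) ^ i) := by
        rw [hRdef, ENNReal.ofReal_add ENNReal.toReal_nonneg
          (mul_nonneg hτ0.le (hpownn i)), ENNReal.ofReal_toReal (hEfin i)]
      have e3 : ENNReal.ofReal (τ * (2⁻¹:ℝ) ^ i) ≤ (2⁻¹ : ℝ≥0∞) ^ i := by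
        calc ENNReal.ofReal (τ * (2⁻¹:ℝ) ^ i) ≤ ENNReal.ofReal ((2⁻¹:ℝ) ^ i) := by
              refine ENNReal.ofReal_le_ofReal ?_
              nlinarith [hpownn i, hτ1]
          _ = (2⁻¹ : ℝ≥0∞) ^ i := by
              rw [ENNReal.ofReal_pow (by norm_num : (0:ℝ) ≤ 2⁻¹)]
              congr 1
              rw [ENNReal.ofReal_inv_of_pos two_pos]
              norm_num
      have e4 : (2⁻¹ : ℝ≥0∞) ^ i ≤ 1 :=
        pow_le_one' (ENNReal.inv_le_one.mpr (by norm_num)) i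
      have e5 : ENNReal.ofReal (R i) ^ n ≤
          2 ^ n * (EMetric.diam (E i) ^ n + (2⁻¹ : ℝ≥0∞) ^ i) := by
        rw [e2]
        refine (ennreal_add_pow_le _ _ n).trans ?_
        refine mul_le_mul_right (add_le_add le_rfl ?_) _
        calc (ENNReal.ofReal (τ * (2⁻¹:ℝ) ^ i)) ^ n ≤ ((2⁻¹ : ℝ≥0∞) ^ i) ^ n := by
              exact pow_le_pow_left' e3 n
          _ ≤ ((2⁻¹ : ℝ≥0∞) ^ i) ^ 1 := pow_le_pow_right_of_le_one' e4 (by omega)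
          _ = (2⁻¹ : ℝ≥0∞) ^ i := pow_one _
      calc C * (ENNReal.ofReal (ε * R i ^ n) + ENNReal.ofReal ε * (2⁻¹ : ℝ≥0∞) ^ i)
          ≤ C * (ENNReal.ofReal ε * (2 ^ n * (EMetric.diam (E i) ^ n + (2⁻¹:ℝ≥0∞) ^ i))
              + ENNReal.ofReal ε * (2⁻¹ : ℝ≥0∞) ^ i) := by
            refine mul_le_mul_right (add_le_add ?_ le_rfl) C
            rw [e1]
            exact mul_le_mul_right e5 _
        _ = A * EMetric.diam (E i) ^ n + B * (2⁻¹ : ℝ≥0∞) ^ i := by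
            rw [hAdef, hBdef]; ring
        _ ≤ A * (⨆ _ : (E i).Nonempty, EMetric.diam (E i) ^ (n : ℝ))
              + B * (2⁻¹:ℝ≥0∞) ^ i := by
            exact add_le_add (mul_le_mul_right (hsupd i) A) le_rfl
    -- assemble a single cover indexed by ℕ
    set e : ℕ ≃ ℕ × ℕ := (Denumerable.eqv (ℕ × ℕ)).symm with hedef
    refine ⟨fun m => G (e m).1 (e m).2, ?_, fun m => hdiamG _ _, ?_⟩
    · rintro _ ⟨x, ⟨hxS, hxj⟩, rfl⟩
      obtain ⟨i, hi⟩ := mem_iUnion.mp (hEcov hxS)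
      have hFx : F x ∈ ⋃ k, G i k := hGcov i (mem_image_of_mem F ⟨⟨hxS, hxj⟩, hi⟩)
      obtain ⟨k, hk⟩ := mem_iUnion.mp hFx
      refine mem_iUnion.mpr ⟨e.symm (i, k), ?_⟩
      simpa using hk
    · have hre : ∑' m, EMetric.diam (G (e m).1 (e m).2) ^ n
          = ∑' i, ∑' k, EMetric.diam (G i k) ^ n := by
        rw [e.tsum_eq (fun p : ℕ × ℕ => EMetric.diam (G p.1 p.2) ^ n)]
        exact ENNReal.tsum_prod (f := fun i k => EMetric.diam (G i k) ^ n)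
      rw [hre]
      have hgeom : ∑' i : ℕ, (2⁻¹ : ℝ≥0∞) ^ i = 2 := by
        rw [ENNReal.tsum_geometric, ENNReal.one_sub_inv_two, inv_inv]
      have h2n : (2:ℝ≥0∞) ^ n = ENNReal.ofReal ((2:ℝ) ^ n) := by
        rw [ENNReal.ofReal_pow (by norm_num)]; norm_num
      have hCeq : C = ENNReal.ofReal (2 ^ n / ω) := by
        rw [hCdef, ENNReal.ofReal_div_of_pos hω, h2n, div_eq_mul_inv]
      calc ∑' i, ∑' k, EMetric.diam (G i k) ^ n
          ≤ ∑' i, (A * (⨆ _ : (E i).Nonempty, EMetric.diam (E i) ^ (n : ℝ))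
              + B * (2⁻¹ : ℝ≥0∞) ^ i) := ENNReal.tsum_le_tsum hblock2
        _ = A * (∑' i, ⨆ _ : (E i).Nonempty, EMetric.diam (E i) ^ (n : ℝ))
              + B * ∑' i, (2⁻¹ : ℝ≥0∞) ^ i := by
            rw [ENNReal.tsum_add, ENNReal.tsum_mul_left, ENNReal.tsum_mul_left]
        _ ≤ A * (μ + 1) + B * 2 := by
            rw [hgeom]
            exact add_le_add (mul_le_mul_right hEsum A) le_rfl
        _ ≤ ENNReal.ofReal (ε * Cr) := by
            have hA : A = ENNReal.ofReal (2 ^ n / ω * ε * 2 ^ n) := by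
              rw [hAdef, hCeq, h2n, ← ENNReal.ofReal_mul hq.le,
                ← ENNReal.ofReal_mul (mul_nonneg hq.le hε0.le)]
            have h2n1 : ((2:ℝ≥0∞) ^ n + 1) = ENNReal.ofReal ((2:ℝ) ^ n + 1) := by
              rw [ENNReal.ofReal_add (by positivity) zero_le_one, h2n, ENNReal.ofReal_one]
            have hB2 : B * 2 = ENNReal.ofReal (2 ^ n / ω * ε * (2 ^ n + 1) * 2) := by
              rw [hBdef, hCeq, h2n1, show (2:ℝ≥0∞) = ENNReal.ofReal 2 by norm_num,
                ← ENNReal.ofReal_mul hq.le,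
                ← ENNReal.ofReal_mul (mul_nonneg hq.le hε0.le),
                ← ENNReal.ofReal_mul
                  (mul_nonneg (mul_nonneg hq.le hε0.le) (by positivity))]
            have hμ1 : μ + 1 ≤ ENNReal.ofReal (μ.toReal + 1) := by
              rw [ENNReal.ofReal_add ENNReal.toReal_nonneg zero_le_one, ENNReal.ofReal_one,
                ENNReal.ofReal_toReal hμS.ne]
            calc A * (μ + 1) + B * 2
                ≤ ENNReal.ofReal (2 ^ n / ω * ε * 2 ^ n) * ENNReal.ofReal (μ.toReal + 1)
                  + ENNReal.ofReal (2 ^ n / ω * ε * (2 ^ n + 1) * 2) := by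
                  rw [hA, hB2]
                  exact add_le_add (mul_le_mul_right hμ1 _) le_rfl
              _ = ENNReal.ofReal (2 ^ n / ω * ε * 2 ^ n * (μ.toReal + 1)
                  + 2 ^ n / ω * ε * (2 ^ n + 1) * 2) := by
                  rw [← ENNReal.ofReal_mul
                    (mul_nonneg (mul_nonneg hq.le hε0.le) (by positivity)),
                    ← ENNReal.ofReal_add
                      (mul_nonneg (mul_nonneg (mul_nonneg hq.le hε0.le) (by positivity))
                        (by positivity))
                      (mul_nonneg (mul_nonneg (mul_nonneg hq.le hε0.le) (by positivity))
                        (by norm_num))]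
              _ = ENNReal.ofReal (ε * Cr) := by
                  congr 1
                  rw [hCrdef]; ring
        _ ≤ ENNReal.ofReal η := by
            refine ENNReal.ofReal_le_ofReal ?_
            have h1 : ε ≤ η / (Cr + 1) := by rw [hεdef]; exact min_le_left _ _
            have h2 : ε * (Cr + 1) ≤ η := by
              rw [← le_div_iff₀ (by linarith : (0:ℝ) < Cr + 1)]
              exact h1
            nlinarith [hε0.le, hCr0]
  -- conclusion
  suffices hmain : μH[(n : ℝ)] (F '' S) = 0 by
    rw [hausdorffPaper, Measure.smul_apply, smul_eq_mul, hmain, mul_zero]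
  refine le_antisymm ?_ zero_le
  have hsub : F '' S ⊆ ⋃ j, F '' (S ∩ Sj j) := by
    rintro _ ⟨x, hx, rfl⟩
    have hx' : x ∈ ⋃ j, Sj j := hcover ▸ hx
    obtain ⟨j, hj⟩ := mem_iUnion.mp hx'
    exact mem_iUnion.mpr ⟨j, mem_image_of_mem F ⟨hx, hj⟩⟩
  calc μH[(n : ℝ)] (F '' S) ≤ μH[(n : ℝ)] (⋃ j, F '' (S ∩ Sj j)) := measure_mono hsub
    _ ≤ ∑' j, μH[(n : ℝ)] (F '' (S ∩ Sj j)) := measure_iUnion_le _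
    _ = 0 := by simp [hj0]

end
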